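/- Let d ≥ 1, ρ > 0 and v > 0. There exists a constant C > 0 (depending only on d, ρ and v) such that for every x ∈ ℝ^d and every δ ∈ (0, ρ]: ∫_{{y ∈ ℝ^d : | ‖y‖ − ρ | ≤ δ}} (2πv)^{−d/2} exp(−‖y − x‖²/(2v)) dy ≤ C δ. -/

import Mathlib

open MeasureTheory

lemma pow_sub_pow_le_aux {a b : ℝ} (ha : 0 ≤ a) (hb : 0 ≤ b) (hba : b ≤ a) (d : ℕ) :
    a ^ d - b ^ d ≤ d * a ^ (d - 1) * (a - b) := by
  rw [← geom_sum₂_mul]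
  apply mul_le_mul_of_nonneg_right _ (by linarith)
  calc ∑ i ∈ Finset.range d, a ^ i * b ^ (d - 1 - i)
      ≤ ∑ _i ∈ Finset.range d, a ^ (d - 1) := by
        apply Finset.sum_le_sum
        intro i hi
        have h1 : a ^ i * b ^ (d - 1 - i) ≤ a ^ i * a ^ (d - 1 - i) := by
          apply mul_le_mul_of_nonneg_left (pow_le_pow_left₀ hb hba _) (pow_nonneg ha _)
        have h2 : a ^ i * a ^ (d - 1 - i) = a ^ (d - 1) := by
          rw [← pow_add]
          congr 1
          have := Finset.mem_range.mp hi
          omega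
        linarith
    _ = d * a ^ (d - 1) := by
        simp [Finset.sum_const, mul_comm]

/-- Gaussian anticoncentration near the sphere of radius `ρ`:
the Gaussian mass of the annulus `{ | ‖y‖ - ρ | ≤ δ }` is at most `C δ`,
uniformly in the Gaussian mean `x`. -/
theorem gaussian_annulus_anticoncentration (d : ℕ) (hd : 1 ≤ d) (ρ v : ℝ)
    (hρ : 0 < ρ) (hv : 0 < v) :
    ∃ C : ℝ, 0 < C ∧
      ∀ x : EuclideanSpace ℝ (Fin d), ∀ δ : ℝ, δ ∈ Set.Ioc (0 : ℝ) ρ →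
        (∫ y in {y : EuclideanSpace ℝ (Fin d) | |‖y‖ - ρ| ≤ δ},
            (2 * Real.pi * v) ^ (-(d : ℝ) / 2) * Real.exp (-‖y - x‖ ^ 2 / (2 * v)))
          ≤ C * δ := by
  have hπv : (0 : ℝ) < 2 * Real.pi * v := by positivity
  set K : ℝ := (2 * Real.pi * v) ^ (-(d : ℝ) / 2) with hK
  have hKpos : 0 < K := Real.rpow_pos_of_pos hπv _
  set B : ℝ := (volume (Metric.ball (0 : EuclideanSpace ℝ (Fin d)) 1)).toReal with hB
  have hBfin : volume (Metric.ball (0 : EuclideanSpace ℝ (Fin d)) 1) < ⊤ :=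
    measure_ball_lt_top
  have hBpos : 0 < B := by
    rw [hB, ENNReal.toReal_pos_iff]
    exact ⟨Metric.measure_ball_pos _ _ one_pos, hBfin⟩
  refine ⟨K * B * (2 * d * (2 * ρ) ^ (d - 1)), by positivity, ?_⟩
  intro x δ hδ
  obtain ⟨hδ0, hδρ⟩ := hδ
  set S : Set (EuclideanSpace ℝ (Fin d)) := {y | |‖y‖ - ρ| ≤ δ} with hS
  have hSeq : S = Metric.closedBall (0 : EuclideanSpace ℝ (Fin d)) (ρ + δ) \
      Metric.ball 0 (ρ - δ) := by
    ext y
    simp only [hS, Set.mem_setOf_eq, Set.mem_diff, Metric.mem_closedBall,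
      Metric.mem_ball, dist_zero_right, abs_le, not_lt]
    constructor
    · rintro ⟨h1, h2⟩; constructor <;> linarith
    · rintro ⟨h1, h2⟩; constructor <;> linarith
  have hdim : Module.finrank ℝ (EuclideanSpace ℝ (Fin d)) = d := by
    simp [finrank_euclideanSpace]
  have hcb : volume (Metric.closedBall (0 : EuclideanSpace ℝ (Fin d)) (ρ + δ)) =
      ENNReal.ofReal ((ρ + δ) ^ d) * volume (Metric.ball (0 : EuclideanSpace ℝ (Fin d)) 1) := by
    rw [Measure.addHaar_closedBall _ _ (by linarith), hdim]
  haveI : Nontrivial (EuclideanSpace ℝ (Fin d)) :=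
    Module.nontrivial_of_finrank_pos (R := ℝ) (by rw [hdim]; omega)
  have hob : volume (Metric.ball (0 : EuclideanSpace ℝ (Fin d)) (ρ - δ)) =
      ENNReal.ofReal ((ρ - δ) ^ d) * volume (Metric.ball (0 : EuclideanSpace ℝ (Fin d)) 1) := by
    rw [Measure.addHaar_ball _ _ (by linarith), hdim]
  have hsub : Metric.ball (0 : EuclideanSpace ℝ (Fin d)) (ρ - δ) ⊆
      Metric.closedBall 0 (ρ + δ) :=
    (Metric.ball_subset_closedBall).trans (Metric.closedBall_subset_closedBall (by linarith))
  have hvolS : volume S = ENNReal.ofReal ((ρ + δ) ^ d - (ρ - δ) ^ d) *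
      volume (Metric.ball (0 : EuclideanSpace ℝ (Fin d)) 1) := by
    rw [hSeq, measure_diff hsub measurableSet_ball.nullMeasurableSet
      ((hob ▸ ENNReal.mul_lt_top ENNReal.ofReal_lt_top hBfin).ne), hcb, hob,
      ← ENNReal.sub_mul (fun _ _ => hBfin.ne), ← ENNReal.ofReal_sub _ (pow_nonneg (by linarith) _)]
  have hvolS_fin : volume S < ⊤ := by
    rw [hvolS]
    exact ENNReal.mul_lt_top ENNReal.ofReal_lt_top hBfin
  have hSm : MeasurableSet S := by
    rw [hSeq]; exact measurableSet_closedBall.diff measurableSet_ball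
  have hbound : ∀ y ∈ S,
      ‖K * Real.exp (-‖y - x‖ ^ 2 / (2 * v))‖ ≤ K := by
    intro y _
    rw [Real.norm_eq_abs, abs_of_nonneg (by positivity)]
    nth_rewrite 2 [show K = K * 1 by ring]
    apply mul_le_mul_of_nonneg_left _ hKpos.le
    exact Real.exp_le_one_iff.mpr (by
      apply div_nonpos_of_nonpos_of_nonneg (neg_nonpos.mpr (by positivity)) (by linarith))
  have key := norm_setIntegral_le_of_norm_le_const (μ := volume) (s := S)
    (f := fun y => K * Real.exp (-‖y - x‖ ^ 2 / (2 * v))) hvolS_fin hbound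
  have h1 : (∫ y in S, K * Real.exp (-‖y - x‖ ^ 2 / (2 * v))) ≤ K * (volume S).toReal :=
    le_trans (le_abs_self _) key
  refine h1.trans ?_
  have htr : (volume S).toReal = ((ρ + δ) ^ d - (ρ - δ) ^ d) * B := by
    rw [hvolS, ENNReal.toReal_mul, ENNReal.toReal_ofReal (by
      have := pow_le_pow_left₀ (by linarith : (0:ℝ) ≤ ρ - δ) (by linarith : ρ - δ ≤ ρ + δ) d
      linarith)]
  rw [htr]
  have hpow : (ρ + δ) ^ d - (ρ - δ) ^ d ≤ 2 * d * (2 * ρ) ^ (d - 1) * δ := by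
    have h := pow_sub_pow_le_aux (a := ρ + δ) (b := ρ - δ)
      (by linarith) (by linarith) (by linarith) d
    have h2 : (ρ + δ) ^ (d - 1) ≤ (2 * ρ) ^ (d - 1) :=
      pow_le_pow_left₀ (by linarith) (by linarith) _
    have h3 : (d : ℝ) * (ρ + δ) ^ (d - 1) * (ρ + δ - (ρ - δ)) ≤
        2 * d * (2 * ρ) ^ (d - 1) * δ := by
      have hd0 : (0 : ℝ) ≤ d := Nat.cast_nonneg d
      have : (ρ + δ - (ρ - δ)) = 2 * δ := by ring
      rw [this]
      have hm := mul_le_mul_of_nonneg_left h2 (show (0:ℝ) ≤ (d : ℝ) * (2 * δ) by positivity)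
      nlinarith [hm]
    linarith
  calc K * (((ρ + δ) ^ d - (ρ - δ) ^ d) * B)
      ≤ K * ((2 * d * (2 * ρ) ^ (d - 1) * δ) * B) := by
        apply mul_le_mul_of_nonneg_left _ hKpos.le
        exact mul_le_mul_of_nonneg_right hpow hBpos.le
    _ = K * B * (2 * d * (2 * ρ) ^ (d - 1)) * δ := by ring
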